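/- Let T be an ergodic measure-preserving ℤ-action on a σ-finite measure space (X,μ), and let (W_n) be a sequence of measurable sets such that μ(W_n △ T_{-g} W_n) → 0 for every g ∈ ℤ. If there exists a set A of finite, strictly positive measure with lim_n μ(A ∩ W_n) = 0, then for every set B of finite measure, lim_n μ(B ∩ W_n) = 0. -/

import Mathlib

open MeasureTheory Filter Topology

/-- Lemma 3.3 (abstract form): for an ergodic measure-preserving `ℤ`-action and
asymptotically invariant sets `W_n`, if some set of finite positive measure is
asymptotically disjoint from `W_n`, then so is every set of finite measure. -/
theorem stmt2 {X : Type*} [MeasurableSpace X] (μ : Measure X) [SigmaFinite μ]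
    (T : ℤ → X → X) (hmp : ∀ g, MeasurePreserving (T g) μ μ)
    (hadd : ∀ g h x, T (g + h) x = T g (T h x)) (hzero : ∀ x, T 0 x = x)
    (herg : Ergodic (T 1) μ)
    (W : ℕ → Set X) (hW : ∀ n, MeasurableSet (W n))
    (hWinv : ∀ g : ℤ, Tendsto (fun n => μ (symmDiff (W n) (T g ⁻¹' W n))) atTop (𝓝 0))
    (A : Set X) (hA : MeasurableSet A) (hA0 : 0 < μ A) (hAfin : μ A ≠ ⊤)
    (hAW : Tendsto (fun n => μ (A ∩ W n)) atTop (𝓝 0)) :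
    ∀ B : Set X, MeasurableSet B → μ B ≠ ⊤ →
      Tendsto (fun n => μ (B ∩ W n)) atTop (𝓝 0) := by
  intro B hB hBfin
  -- each translate of A is asymptotically disjoint from W n
  have hg : ∀ g : ℤ, Tendsto (fun n => μ (T g ⁻¹' A ∩ W n)) atTop (𝓝 0) := by
    intro g
    have hle : ∀ n, μ (T g ⁻¹' A ∩ W n)
        ≤ μ (A ∩ W n) + μ (symmDiff (W n) (T g ⁻¹' W n)) := by
      intro n
      have hsub : T g ⁻¹' A ∩ W n ⊆ T g ⁻¹' (A ∩ W n) ∪ symmDiff (W n) (T g ⁻¹' W n) := by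
        rintro x ⟨hxA, hxW⟩
        by_cases hx : x ∈ T g ⁻¹' W n
        · exact Or.inl ⟨hxA, hx⟩
        · exact Or.inr (Set.mem_symmDiff.2 (Or.inl ⟨hxW, hx⟩))
      calc μ (T g ⁻¹' A ∩ W n)
          ≤ μ (T g ⁻¹' (A ∩ W n)) + μ (symmDiff (W n) (T g ⁻¹' W n)) :=
            (measure_mono hsub).trans (measure_union_le _ _)
        _ = μ (A ∩ W n) + μ (symmDiff (W n) (T g ⁻¹' W n)) := by
            rw [(hmp g).measure_preimage (hA.inter (hW n)).nullMeasurableSet]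
    have hsum : Tendsto (fun n => μ (A ∩ W n) + μ (symmDiff (W n) (T g ⁻¹' W n)))
        atTop (𝓝 0) := by
      simpa using hAW.add (hWinv g)
    exact tendsto_of_tendsto_of_tendsto_of_le_of_le tendsto_const_nhds hsum
      (fun n => zero_le) hle
  -- the union of all translates of A is invariant and conull
  set U : Set X := ⋃ g : ℤ, T g ⁻¹' A with hU
  have hUmeas : MeasurableSet U :=
    MeasurableSet.iUnion fun g => (hmp g).measurable hA
  have hUinv : T 1 ⁻¹' U = U := by
    ext x
    simp only [hU, Set.mem_preimage, Set.mem_iUnion]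
    constructor
    · rintro ⟨g, hgx⟩
      refine ⟨g + 1, ?_⟩
      rw [hadd]; exact hgx
    · rintro ⟨g, hgx⟩
      refine ⟨g - 1, ?_⟩
      rw [show T (g - 1) (T 1 x) = T (g - 1 + 1) x from (hadd _ _ _).symm]
      simpa using hgx
  have hUc : μ Uᶜ = 0 := by
    rcases herg.measure_self_or_compl_eq_zero hUmeas hUinv with h | h
    · exfalso
      have hAU : A ⊆ U := by
        intro x hx
        exact Set.mem_iUnion.2 ⟨0, by simpa [hzero x] using hx⟩
      have this : μ A ≤ μ U := measure_mono hAU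
      rw [h] at this
      exact hA0.ne' (le_antisymm this zero_le)
    · exact h
  -- approximate B by finite unions of translates
  classical
  set e : ℕ → ℤ := fun n => (Denumerable.eqv ℤ).symm n with he
  have hesurj : Function.Surjective e := (Denumerable.eqv ℤ).symm.surjective
  set C : ℕ → Set X := fun k => ⋃ i ∈ Finset.range k, T (e i) ⁻¹' A with hC
  have hCmeas : ∀ k, MeasurableSet (C k) := fun k =>
    (Finset.range k).measurableSet_biUnion fun i _ => (hmp (e i)).measurable hA
  have hCU : ⋃ k, C k = U := by
    ext x
    simp only [hC, hU, Set.mem_iUnion, Finset.mem_range]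
    constructor
    · rintro ⟨k, i, _, hx⟩; exact ⟨e i, hx⟩
    · rintro ⟨g, hx⟩
      obtain ⟨i, rfl⟩ := hesurj g
      exact ⟨i + 1, i, Nat.lt_succ_self i, hx⟩
  have hD : Tendsto (fun k => μ (B \ C k)) atTop (𝓝 0) := by
    have hanti : Antitone fun k => B \ C k := by
      intro k l hkl
      apply Set.diff_subset_diff_right
      intro x hx
      simp only [hC, Set.mem_iUnion, Finset.mem_range] at hx ⊢
      obtain ⟨i, hik, hx⟩ := hx
      exact ⟨i, hik.trans_le hkl, hx⟩
    have hInter : ⋂ k, (B \ C k) = B \ U := by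
      rw [← hCU, Set.diff_iUnion]
    have h0 : μ (B \ U) = 0 :=
      measure_mono_null (fun x hx => hx.2) hUc
    have := tendsto_measure_iInter_atTop
      (fun k => (hB.diff (hCmeas k)).nullMeasurableSet) hanti
      ⟨0, (measure_mono Set.diff_subset).trans_lt hBfin.lt_top |>.ne⟩
    rw [hInter, h0] at this
    exact this
  -- combine
  rw [ENNReal.tendsto_nhds_zero]
  intro ε hε
  obtain ⟨k, hk⟩ := (ENNReal.tendsto_nhds_zero.1 hD (ε / 2)
    (ENNReal.half_pos hε.ne')).exists
  have hsum : Tendsto (fun n => ∑ i ∈ Finset.range k, μ (T (e i) ⁻¹' A ∩ W n))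
      atTop (𝓝 0) := by
    have := tendsto_finset_sum (Finset.range k) (fun i _ => hg (e i))
    simpa using this
  filter_upwards [ENNReal.tendsto_nhds_zero.1 hsum (ε / 2)
    (ENNReal.half_pos hε.ne')] with n hn
  have h1 : B ∩ W n ⊆ (B \ C k) ∪ ⋃ i ∈ Finset.range k, (T (e i) ⁻¹' A ∩ W n) := by
    rintro x ⟨hxB, hxW⟩
    by_cases hx : x ∈ C k
    · right
      simp only [hC, Set.mem_iUnion, Finset.mem_range] at hx
      obtain ⟨i, hik, hx⟩ := hx
      exact Set.mem_biUnion (Finset.mem_range.2 hik) ⟨hx, hxW⟩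
    · exact Or.inl ⟨hxB, hx⟩
  calc μ (B ∩ W n)
      ≤ μ (B \ C k) + μ (⋃ i ∈ Finset.range k, (T (e i) ⁻¹' A ∩ W n)) :=
        (measure_mono h1).trans (measure_union_le _ _)
    _ ≤ ε / 2 + ∑ i ∈ Finset.range k, μ (T (e i) ⁻¹' A ∩ W n) :=
        add_le_add hk (measure_biUnion_finset_le _ _)
    _ ≤ ε / 2 + ε / 2 := add_le_add le_rfl hn
    _ = ε := ENNReal.add_halves ε
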